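/- Let g be a Schwartz function on ℝ, let θ₀, μ₀, ω₀ ∈ ℝ, let φ(x) = (θ₀/6)x³ + (μ₀/2)x² + ω₀x, and let f(x) = exp(2πi φ(x)). Then for all (t, ξ, λ) ∈ ℝ³: ∂_t T_f^{(g)}(t, ξ, λ) = 2πi [ φ'(t) · T_f^{(g)}(t, ξ, λ) + φ''(t) · T_f^{(tg)}(t, ξ, λ) + (φ'''(t)/2) · T_f^{(t²g)}(t, ξ, λ) ]. -/

import Mathlib

open MeasureTheory Real Complex Finset

noncomputable section

/-- The chirplet transform of `f` with window `g`. -/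
def CT (f g : ℝ → ℂ) (t ξ lam : ℝ) : ℂ :=
  ∫ x : ℝ, f x * (starRingEnd ℂ) (g (x - t)) *
    Complex.exp (-(2 * (π : ℂ) * Complex.I * (ξ : ℂ) * ((x : ℂ) - (t : ℂ)))
      - Complex.I * (π : ℂ) * (lam : ℂ) * ((x : ℂ) - (t : ℂ)) ^ 2)

/-- The window `x ↦ x^n g x`. -/
def tw (n : ℕ) (g : ℝ → ℂ) : ℝ → ℂ := fun x => (x : ℂ) ^ n * g x

/-- The chirplet transform as a function of the time variable. -/
def Tt (f g : ℝ → ℂ) (ξ lam : ℝ) : ℝ → ℂ := fun t => CT f g t ξ lam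

namespace ChirpAux

def cc : ℂ := 2 * (π : ℂ) * Complex.I

def phase (θ₀ μ₀ ω₀ x : ℝ) : ℝ := θ₀ / 6 * x ^ 3 + μ₀ / 2 * x ^ 2 + ω₀ * x

def dphase (θ₀ μ₀ ω₀ x : ℝ) : ℝ := θ₀ / 2 * x ^ 2 + μ₀ * x + ω₀

def fc (θ₀ μ₀ ω₀ : ℝ) : ℝ → ℂ := fun x => Complex.exp (cc * ((phase θ₀ μ₀ ω₀ x : ℝ) : ℂ))

def E (ξ lam : ℝ) (y : ℝ) : ℂ :=
  Complex.exp (-(2 * (π : ℂ) * Complex.I * (ξ : ℂ) * (y : ℂ))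
    - Complex.I * (π : ℂ) * (lam : ℂ) * (y : ℂ) ^ 2)

lemma fc_eq (θ₀ μ₀ ω₀ : ℝ) :
    (fun x : ℝ => Complex.exp (2 * (π : ℂ) * Complex.I *
      ((θ₀ / 6 * x ^ 3 + μ₀ / 2 * x ^ 2 + ω₀ * x : ℝ) : ℂ))) = fc θ₀ μ₀ ω₀ := rfl

lemma norm_fc (θ₀ μ₀ ω₀ x : ℝ) : ‖fc θ₀ μ₀ ω₀ x‖ = 1 := by
  simp [fc, cc, Complex.norm_exp, ← Complex.ofReal_pow]

lemma norm_E (ξ lam y : ℝ) : ‖E ξ lam y‖ = 1 := by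
  simp [E, Complex.norm_exp, ← Complex.ofReal_pow]

lemma continuous_fc (θ₀ μ₀ ω₀ : ℝ) : Continuous (fc θ₀ μ₀ ω₀) := by
  unfold fc phase; fun_prop

lemma continuous_E (ξ lam : ℝ) : Continuous (E ξ lam) := by
  unfold E; fun_prop

lemma ct_shift (f h : ℝ → ℂ) (t ξ lam : ℝ) :
    CT f h t ξ lam = ∫ y : ℝ, f (y + t) * (starRingEnd ℂ) (h y) * E ξ lam y := by
  unfold CT
  rw [← integral_add_right_eq_self (fun x : ℝ => f x * (starRingEnd ℂ) (h (x - t)) *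
    Complex.exp (-(2 * (π : ℂ) * Complex.I * (ξ : ℂ) * ((x : ℂ) - (t : ℂ)))
      - Complex.I * (π : ℂ) * (lam : ℂ) * ((x : ℂ) - (t : ℂ)) ^ 2)) t]
  congr 1
  funext y
  simp only [add_sub_cancel_right, E]
  congr 2
  push_cast
  ring

lemma hasDerivAt_phase (θ₀ μ₀ ω₀ u : ℝ) :
    HasDerivAt (phase θ₀ μ₀ ω₀) (dphase θ₀ μ₀ ω₀ u) u := by
  unfold phase dphase
  have h := (((hasDerivAt_pow 3 u).const_mul (θ₀ / 6)).add
    ((hasDerivAt_pow 2 u).const_mul (μ₀ / 2))).add ((hasDerivAt_id u).const_mul ω₀)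
  refine h.congr_deriv ?_
  push_cast
  norm_num
  ring

lemma hasDerivAt_fc (θ₀ μ₀ ω₀ y t : ℝ) :
    HasDerivAt (fun s : ℝ => fc θ₀ μ₀ ω₀ (y + s))
      (cc * ((dphase θ₀ μ₀ ω₀ (y + t) : ℝ) : ℂ) * fc θ₀ μ₀ ω₀ (y + t)) t := by
  have h1 : HasDerivAt (fun s : ℝ => phase θ₀ μ₀ ω₀ (y + s)) (dphase θ₀ μ₀ ω₀ (y + t)) t := by
    simpa [Function.comp_def] using (hasDerivAt_phase θ₀ μ₀ ω₀ (y + t)).comp t ((hasDerivAt_id t).const_add y)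
  have h2 := ((h1.ofReal_comp.const_mul cc).cexp)
  refine h2.congr_deriv ?_
  unfold fc
  ring

lemma norm_core (θ₀ μ₀ ω₀ ξ lam : ℝ) (g : ℝ → ℂ) (n : ℕ) (s y : ℝ) :
    ‖(y : ℂ) ^ n * (fc θ₀ μ₀ ω₀ (y + s) * ((starRingEnd ℂ) (g y) * E ξ lam y))‖
      = ‖y‖ ^ n * ‖g y‖ := by
  rw [norm_mul, norm_mul, norm_mul, norm_pow, norm_fc, norm_E, RCLike.norm_conj]
  simp [Complex.norm_real]

lemma integrable_core (θ₀ μ₀ ω₀ ξ lam : ℝ) (g : SchwartzMap ℝ ℂ) (n : ℕ) (s : ℝ) :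
    Integrable (fun y : ℝ =>
      (y : ℂ) ^ n * (fc θ₀ μ₀ ω₀ (y + s) * ((starRingEnd ℂ) ((g : ℝ → ℂ) y) * E ξ lam y))) := by
  refine (g.integrable_pow_mul volume n).mono ?_ ?_
  · apply Continuous.aestronglyMeasurable
    exact (continuous_ofReal.pow n).mul
      (((continuous_fc θ₀ μ₀ ω₀).comp (continuous_id.add continuous_const)).mul
        ((continuous_star.comp g.continuous).mul (continuous_E ξ lam)))
  · refine Filter.Eventually.of_forall fun y => ?_
    rw [norm_core]
    exact le_abs_self _

lemma ct_tw (f : ℝ → ℂ) (g : ℝ → ℂ) (n : ℕ) (t ξ lam : ℝ) :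
    CT f (tw n g) t ξ lam = ∫ y : ℝ, (y : ℂ) ^ n * (f (y + t) * ((starRingEnd ℂ) (g y) * E ξ lam y)) := by
  rw [ct_shift]
  congr 1
  funext y
  simp only [tw, map_mul, map_pow, Complex.conj_ofReal]
  ring

end ChirpAux

open ChirpAux in
theorem chirplet_deriv_cubic_phase
    (g : SchwartzMap ℝ ℂ) (θ₀ μ₀ ω₀ : ℝ)
    (f : ℝ → ℂ)
    (hf : f = fun x =>
      Complex.exp (2 * (π : ℂ) * Complex.I *
        ((θ₀ / 6 * x ^ 3 + μ₀ / 2 * x ^ 2 + ω₀ * x : ℝ) : ℂ)))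
    (t ξ lam : ℝ) :
    deriv (Tt f (⇑g) ξ lam) t =
      2 * (π : ℂ) * Complex.I *
        (((θ₀ / 2 * t ^ 2 + μ₀ * t + ω₀ : ℝ) : ℂ) * CT f (⇑g) t ξ lam
          + ((θ₀ * t + μ₀ : ℝ) : ℂ) * CT f (tw 1 (⇑g)) t ξ lam
          + ((θ₀ : ℂ) / 2) * CT f (tw 2 (⇑g)) t ξ lam) := by
  have hfc : f = fc θ₀ μ₀ ω₀ := hf.trans (fc_eq θ₀ μ₀ ω₀)
  subst hfc
  set K : ℝ → ℂ := fun y => (starRingEnd ℂ) ((g : ℝ → ℂ) y) * E ξ lam y with hK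
  -- the transform as a shifted integral
  have hTt : Tt (fc θ₀ μ₀ ω₀) (⇑g) ξ lam
      = fun s : ℝ => ∫ y : ℝ, fc θ₀ μ₀ ω₀ (y + s) * K y := by
    funext s
    rw [Tt, ct_shift]
    congr 1; funext y; rw [hK]; ring
  -- differentiation under the integral sign
  set F' : ℝ → ℝ → ℂ := fun s y =>
    cc * ((dphase θ₀ μ₀ ω₀ (y + s) : ℝ) : ℂ) * fc θ₀ μ₀ ω₀ (y + s) * K y with hF'
  set R : ℝ := |t| + 1 with hR
  set A : ℝ := |θ₀| * R ^ 2 + |μ₀| * R + |ω₀| with hA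
  set bound : ℝ → ℝ := fun y =>
    2 * π * A * (‖y‖ ^ 0 * ‖(g : ℝ → ℂ) y‖) + (2 * π * |μ₀| * (‖y‖ ^ 1 * ‖(g : ℝ → ℂ) y‖)
      + 2 * π * |θ₀| * (‖y‖ ^ 2 * ‖(g : ℝ → ℂ) y‖)) with hbd
  have normK : ∀ y : ℝ, ‖K y‖ = ‖(g : ℝ → ℂ) y‖ := by
    intro y
    rw [hK]
    simp only [norm_mul, norm_E, RCLike.norm_conj, mul_one]
  have hcont : ∀ s : ℝ, Continuous fun y : ℝ => fc θ₀ μ₀ ω₀ (y + s) * K y := fun s =>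
    ((continuous_fc θ₀ μ₀ ω₀).comp (continuous_id.add continuous_const)).mul
      ((continuous_star.comp g.continuous).mul (continuous_E ξ lam))
  have hInt : ∀ s : ℝ, Integrable (fun y : ℝ => fc θ₀ μ₀ ω₀ (y + s) * K y) := by
    intro s
    simpa using integrable_core θ₀ μ₀ ω₀ ξ lam g 0 s
  have key : HasDerivAt (fun s : ℝ => ∫ y : ℝ, fc θ₀ μ₀ ω₀ (y + s) * K y)
      (∫ y : ℝ, F' t y) t := by
    refine (hasDerivAt_integral_of_dominated_loc_of_deriv_le (μ := volume)
      (F := fun s y => fc θ₀ μ₀ ω₀ (y + s) * K y) (F' := F') (bound := bound)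
      (Metric.ball_mem_nhds t one_pos) (Filter.Eventually.of_forall fun s => (hcont s).aestronglyMeasurable) (hInt t)
      ?_ ?_ ?_ ?_).2
    · apply Continuous.aestronglyMeasurable
      refine ((continuous_const.mul (Complex.continuous_ofReal.comp ?_)).mul
        ((continuous_fc θ₀ μ₀ ω₀).comp (continuous_id.add continuous_const))).mul
        ((continuous_star.comp g.continuous).mul (continuous_E ξ lam))
      unfold dphase
      fun_prop
    · refine Filter.Eventually.of_forall fun y => fun s hs => ?_
      have hs' : |s| ≤ R := by
        rw [hR]
        have := abs_sub_abs_le_abs_sub s t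
        have h2 : |s - t| < 1 := by simpa [Real.dist_eq] using Metric.mem_ball.mp hs
        linarith
      have hd : |dphase θ₀ μ₀ ω₀ (y + s)| ≤ A + |μ₀| * |y| + |θ₀| * y ^ 2 := by
        have h1 : |dphase θ₀ μ₀ ω₀ (y + s)|
            ≤ |θ₀| / 2 * (y + s) ^ 2 + |μ₀| * |y + s| + |ω₀| := by
          unfold dphase
          calc |θ₀ / 2 * (y + s) ^ 2 + μ₀ * (y + s) + ω₀|
              ≤ |θ₀ / 2 * (y + s) ^ 2 + μ₀ * (y + s)| + |ω₀| := abs_add_le _ _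
            _ ≤ |θ₀ / 2 * (y + s) ^ 2| + |μ₀ * (y + s)| + |ω₀| := by
                have := abs_add_le (θ₀ / 2 * (y + s) ^ 2) (μ₀ * (y + s))
                linarith
            _ = |θ₀| / 2 * (y + s) ^ 2 + |μ₀| * |y + s| + |ω₀| := by
                rw [abs_mul, abs_mul, abs_div, _root_.abs_pow, _root_.sq_abs]
                norm_num
        have hs2 : s ^ 2 ≤ R ^ 2 :=
          sq_le_sq' (by linarith [(abs_le.mp hs').1]) (abs_le.mp hs').2
        have h2 : (y + s) ^ 2 ≤ 2 * y ^ 2 + 2 * R ^ 2 := by nlinarith [sq_nonneg (y - s)]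
        have h3 : |y + s| ≤ |y| + R := (abs_add_le y s).trans (by linarith)
        have h4 : 0 ≤ |θ₀| := abs_nonneg _
        have h5 : 0 ≤ |μ₀| := abs_nonneg _
        rw [hA]
        nlinarith
      have hnorm : ‖F' s y‖ = 2 * π * |dphase θ₀ μ₀ ω₀ (y + s)| * ‖(g : ℝ → ℂ) y‖ := by
        rw [hF']
        simp only [norm_mul]
        rw [normK, norm_fc]
        simp [cc, map_mul, Complex.norm_real, Complex.norm_I,
          abs_of_pos Real.pi_pos]
      rw [hnorm, hbd]
      have hg0 : (0:ℝ) ≤ ‖(g : ℝ → ℂ) y‖ := norm_nonneg _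
      have h2π : (0:ℝ) ≤ 2 * π := by positivity
      simp only [Real.norm_eq_abs, pow_zero, pow_one, one_mul]
      rw [_root_.sq_abs]
      calc 2 * π * |dphase θ₀ μ₀ ω₀ (y + s)| * ‖(g : ℝ → ℂ) y‖
          = 2 * π * (|dphase θ₀ μ₀ ω₀ (y + s)| * ‖(g : ℝ → ℂ) y‖) := by ring
        _ ≤ 2 * π * ((A + |μ₀| * |y| + |θ₀| * y ^ 2) * ‖(g : ℝ → ℂ) y‖) :=
            mul_le_mul_of_nonneg_left (mul_le_mul_of_nonneg_right hd hg0) h2π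
        _ = 2 * π * A * ‖(g : ℝ → ℂ) y‖ + (2 * π * |μ₀| * (|y| * ‖(g : ℝ → ℂ) y‖)
            + 2 * π * |θ₀| * (y ^ 2 * ‖(g : ℝ → ℂ) y‖)) := by ring
    · rw [hbd]
      exact (((g.integrable_pow_mul volume 0).const_mul _).add
        (((g.integrable_pow_mul volume 1).const_mul _).add
          ((g.integrable_pow_mul volume 2).const_mul _)))
    · refine Filter.Eventually.of_forall fun y => fun s _ => ?_
      exact (hasDerivAt_fc θ₀ μ₀ ω₀ y s).mul_const (K y)
  -- compute the derivative integral
  have hsplit : (fun y : ℝ => F' t y) = fun y : ℝ =>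
      cc * ((θ₀ / 2 * t ^ 2 + μ₀ * t + ω₀ : ℝ) : ℂ) * ((y : ℂ) ^ 0 * (fc θ₀ μ₀ ω₀ (y + t) * K y))
      + (cc * ((θ₀ * t + μ₀ : ℝ) : ℂ) * ((y : ℂ) ^ 1 * (fc θ₀ μ₀ ω₀ (y + t) * K y))
        + cc * ((θ₀ : ℂ) / 2) * ((y : ℂ) ^ 2 * (fc θ₀ μ₀ ω₀ (y + t) * K y))) := by
    funext y
    rw [hF']
    unfold dphase
    push_cast
    ring
  have hint : ∀ n : ℕ, Integrable (fun y : ℝ =>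
      (y : ℂ) ^ n * (fc θ₀ μ₀ ω₀ (y + t) * K y)) := fun n =>
    integrable_core θ₀ μ₀ ω₀ ξ lam g n t
  have hIeq : (∫ y : ℝ, F' t y)
      = cc * ((θ₀ / 2 * t ^ 2 + μ₀ * t + ω₀ : ℝ) : ℂ)
          * (∫ y : ℝ, (y : ℂ) ^ 0 * (fc θ₀ μ₀ ω₀ (y + t) * K y))
        + (cc * ((θ₀ * t + μ₀ : ℝ) : ℂ)
          * (∫ y : ℝ, (y : ℂ) ^ 1 * (fc θ₀ μ₀ ω₀ (y + t) * K y))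
          + cc * ((θ₀ : ℂ) / 2)
          * (∫ y : ℝ, (y : ℂ) ^ 2 * (fc θ₀ μ₀ ω₀ (y + t) * K y))) := by
    have i0 : Integrable (fun y : ℝ => cc * ((θ₀ / 2 * t ^ 2 + μ₀ * t + ω₀ : ℝ) : ℂ)
        * ((y : ℂ) ^ 0 * (fc θ₀ μ₀ ω₀ (y + t) * K y))) volume := (hint 0).const_mul _
    have i1 : Integrable (fun y : ℝ => cc * ((θ₀ * t + μ₀ : ℝ) : ℂ)
        * ((y : ℂ) ^ 1 * (fc θ₀ μ₀ ω₀ (y + t) * K y))) volume := (hint 1).const_mul _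
    have i2 : Integrable (fun y : ℝ => cc * ((θ₀ : ℂ) / 2)
        * ((y : ℂ) ^ 2 * (fc θ₀ μ₀ ω₀ (y + t) * K y))) volume := (hint 2).const_mul _
    have i12 : Integrable (fun y : ℝ => cc * ((θ₀ * t + μ₀ : ℝ) : ℂ)
        * ((y : ℂ) ^ 1 * (fc θ₀ μ₀ ω₀ (y + t) * K y)) + cc * ((θ₀ : ℂ) / 2)
        * ((y : ℂ) ^ 2 * (fc θ₀ μ₀ ω₀ (y + t) * K y))) volume := i1.add i2
    rw [hsplit, integral_add i0 i12, integral_add i1 i2,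
      integral_const_mul, integral_const_mul, integral_const_mul]
  -- assemble
  rw [hTt, key.deriv, hIeq, ct_shift (fc θ₀ μ₀ ω₀) (⇑g) t ξ lam,
    ct_tw (fc θ₀ μ₀ ω₀) (⇑g) 1 t ξ lam, ct_tw (fc θ₀ μ₀ ω₀) (⇑g) 2 t ξ lam]
  have h0 : (∫ y : ℝ, fc θ₀ μ₀ ω₀ (y + t) * (starRingEnd ℂ) ((g : ℝ → ℂ) y) * E ξ lam y)
      = ∫ y : ℝ, (y : ℂ) ^ 0 * (fc θ₀ μ₀ ω₀ (y + t) * K y) := by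
    congr 1; funext y; rw [hK]; ring
  rw [h0]
  rw [hK]
  rw [cc]
  ring
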